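/- Suppose d = 1 (scalar parameter). Fix a configuration y : S → X, blocks A_1,…,A_C ⊆ S, and real numbers θ* and θ*_CL. Let Var(θ) denote the variance of s under the full Gibbs distribution f(·∣θ), and let Var_i(θ) denote the variance of s under the conditional distribution u ↦ f_{A_i}(y[A_i↦u]∣θ). If ∑_{i=1}^C Var_i(θ*_CL) ≠ 0 and the weight is chosen as w = Var(θ*) / ∑_{i=1}^C Var_i(θ*_CL), then the second derivative of θ ↦ log f(y∣θ) at θ* equals the second derivative of θ ↦ w ∑_{i=1}^C log f_{A_i}(y∣θ) at θ*_CL. -/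

import Mathlib

open scoped BigOperators

/-- `updOn y A u` is the configuration equal to `u` on `A` and to `y` off `A`. -/
def updOn {S X : Type} [DecidableEq S] (y : S → X) (A : Finset S) (u : A → X) :
    S → X :=
  fun i => if h : i ∈ A then u ⟨i, h⟩ else y i

/-- Full Gibbs likelihood with scalar parameter:
`f(y∣θ) = exp (θ s(y)) / ∑ₓ exp (θ s(x))`. -/
noncomputable def fFull1 {S X : Type} [Fintype S] [Fintype X] [DecidableEq S]
    (s : (S → X) → ℝ) (y : S → X) (θ : ℝ) : ℝ :=
  Real.exp (θ * s y) / ∑ x : S → X, Real.exp (θ * s x)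

/-- Block conditional likelihood with scalar parameter:
`f_A(y∣θ) = exp (θ s(y)) / ∑_{u : A → X} exp (θ s(y[A↦u]))`. -/
noncomputable def fBlock1 {S X : Type} [Fintype S] [Fintype X] [DecidableEq S]
    (s : (S → X) → ℝ) (A : Finset S) (y : S → X) (θ : ℝ) : ℝ :=
  Real.exp (θ * s y) / ∑ u : A → X, Real.exp (θ * s (updOn y A u))

/-- Variance of `s` under the full Gibbs distribution `f(·∣θ)`. -/
noncomputable def varFull {S X : Type} [Fintype S] [Fintype X] [DecidableEq S]
    (s : (S → X) → ℝ) (θ : ℝ) : ℝ :=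
  (∑ x : S → X, s x ^ 2 * fFull1 s x θ) - (∑ x : S → X, s x * fFull1 s x θ) ^ 2

/-- Variance of `s` under the conditional distribution `u ↦ f_A(y[A↦u]∣θ)`. -/
noncomputable def varBlock {S X : Type} [Fintype S] [Fintype X] [DecidableEq S]
    (s : (S → X) → ℝ) (A : Finset S) (y : S → X) (θ : ℝ) : ℝ :=
  (∑ u : A → X, s (updOn y A u) ^ 2 * fBlock1 s A (updOn y A u) θ)
    - (∑ u : A → X, s (updOn y A u) * fBlock1 s A (updOn y A u) θ) ^ 2

section aux
variable {ι : Type} [Fintype ι] [Nonempty ι]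

private lemma Zpos (a : ι → ℝ) (t : ℝ) : 0 < ∑ i, Real.exp (t * a i) :=
  Finset.sum_pos (fun i _ => Real.exp_pos _) Finset.univ_nonempty

private lemma hasDerivAt_Z (a : ι → ℝ) (t : ℝ) :
    HasDerivAt (fun t => ∑ i, Real.exp (t * a i))
      (∑ i, a i * Real.exp (t * a i)) t := by
  have h : ∀ i ∈ Finset.univ, HasDerivAt (fun t => Real.exp (t * a i))
      (a i * Real.exp (t * a i)) t := by
    intro i _
    have h1 : HasDerivAt (fun t : ℝ => t * a i) (a i) t := by
      simpa using (hasDerivAt_id t).mul_const (a i)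
    simpa [mul_comm, Function.comp_def] using (Real.hasDerivAt_exp (t * a i)).comp t h1
  simpa using HasDerivAt.fun_sum h

private lemma hasDerivAt_Z1 (a : ι → ℝ) (t : ℝ) :
    HasDerivAt (fun t => ∑ i, a i * Real.exp (t * a i))
      (∑ i, a i ^ 2 * Real.exp (t * a i)) t := by
  have h : ∀ i ∈ Finset.univ, HasDerivAt (fun t => a i * Real.exp (t * a i))
      (a i ^ 2 * Real.exp (t * a i)) t := by
    intro i _
    have h1 : HasDerivAt (fun t : ℝ => t * a i) (a i) t := by
      simpa using (hasDerivAt_id t).mul_const (a i)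
    have h2 := ((Real.hasDerivAt_exp (t * a i)).comp t h1).const_mul (a i)
    simpa [sq, mul_comm, mul_assoc, mul_left_comm] using h2
  simpa using HasDerivAt.fun_sum h

private lemma hasDerivAt_logG (a : ι → ℝ) (c t : ℝ) :
    HasDerivAt (fun t => Real.log (Real.exp (t * c) / ∑ i, Real.exp (t * a i)))
      (c - (∑ i, a i * Real.exp (t * a i)) / ∑ i, Real.exp (t * a i)) t := by
  have hfn : (fun t => Real.log (Real.exp (t * c) / ∑ i, Real.exp (t * a i)))
      = fun t => t * c - Real.log (∑ i, Real.exp (t * a i)) := by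
    funext t
    rw [Real.log_div (Real.exp_ne_zero _) (Zpos a t).ne', Real.log_exp]
  rw [hfn]
  have h1 : HasDerivAt (fun t : ℝ => t * c) c t := by
    simpa using (hasDerivAt_id t).mul_const c
  exact h1.sub ((hasDerivAt_Z a t).log (Zpos a t).ne')

private lemma hasDerivAt_mean (a : ι → ℝ) (t : ℝ) :
    HasDerivAt
      (fun t => (∑ i, a i * Real.exp (t * a i)) / ∑ i, Real.exp (t * a i))
      ((∑ i, a i ^ 2 * Real.exp (t * a i)) / (∑ i, Real.exp (t * a i))
        - ((∑ i, a i * Real.exp (t * a i)) / (∑ i, Real.exp (t * a i))) ^ 2) t := by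
  have h := (hasDerivAt_Z1 a t).fun_div (hasDerivAt_Z a t) (Zpos a t).ne'
  refine h.congr_deriv ?_
  field_simp
  simp only [show ∀ x, a x * t = t * a x from fun x => mul_comm _ _]
  ring

private lemma deriv2_logG (a : ι → ℝ) (c θ : ℝ) :
    deriv (deriv (fun t => Real.log (Real.exp (t * c) / ∑ i, Real.exp (t * a i)))) θ
      = -((∑ i, a i ^ 2 * Real.exp (θ * a i)) / (∑ i, Real.exp (θ * a i))
          - ((∑ i, a i * Real.exp (θ * a i)) / (∑ i, Real.exp (θ * a i))) ^ 2) := by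
  have hd : deriv (fun t => Real.log (Real.exp (t * c) / ∑ i, Real.exp (t * a i)))
      = fun t => c - (∑ i, a i * Real.exp (t * a i)) / ∑ i, Real.exp (t * a i) :=
    funext fun t => (hasDerivAt_logG a c t).deriv
  rw [hd]
  have h2 := (hasDerivAt_const θ c).fun_sub (hasDerivAt_mean a θ)
  simpa using h2.deriv

end aux

private lemma updOn_updOn {S X : Type} [DecidableEq S] (y : S → X) (A : Finset S)
    (u v : A → X) : updOn (updOn y A u) A v = updOn y A v := by
  funext i
  unfold updOn
  by_cases h : i ∈ A <;> simp [h]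

private lemma varFull_eq {S X : Type} [Fintype S] [Fintype X] [DecidableEq S]
    (s : (S → X) → ℝ) (θ : ℝ) :
    varFull s θ
      = (∑ x : S → X, s x ^ 2 * Real.exp (θ * s x)) / (∑ x : S → X, Real.exp (θ * s x))
        - ((∑ x : S → X, s x * Real.exp (θ * s x)) / (∑ x : S → X, Real.exp (θ * s x))) ^ 2 := by
  rw [varFull]
  simp only [fFull1, ← mul_div_assoc]
  rw [← Finset.sum_div, ← Finset.sum_div]

private lemma varBlock_eq {S X : Type} [Fintype S] [Fintype X] [DecidableEq S]
    (s : (S → X) → ℝ) (A : Finset S) (y : S → X) (θ : ℝ) :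
    varBlock s A y θ
      = (∑ u : A → X, s (updOn y A u) ^ 2 * Real.exp (θ * s (updOn y A u)))
          / (∑ u : A → X, Real.exp (θ * s (updOn y A u)))
        - ((∑ u : A → X, s (updOn y A u) * Real.exp (θ * s (updOn y A u)))
          / (∑ u : A → X, Real.exp (θ * s (updOn y A u)))) ^ 2 := by
  rw [varBlock]
  simp only [fBlock1, updOn_updOn, ← mul_div_assoc]
  rw [← Finset.sum_div, ← Finset.sum_div]

/-- Magnitude adjustment in the scalar-parameter case: with the weight
`w = Var(θ*) / ∑ᵢ Varᵢ(θ*_CL)`, the second derivative of the log-likelihood at θ*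
matches that of the weighted composite log-likelihood at θ*_CL. -/
theorem magnitude_adjustment_scalar {S X : Type} [Fintype S] [Fintype X]
    [Nonempty X] [DecidableEq S]
    (s : (S → X) → ℝ) (y : S → X) (C : ℕ) (A : Fin C → Finset S)
    (θstar θCL : ℝ)
    (hne : ∑ i : Fin C, varBlock s (A i) y θCL ≠ 0) :
    deriv (deriv (fun t : ℝ => Real.log (fFull1 s y t))) θstar
      = deriv
          (deriv (fun t : ℝ =>
            (varFull s θstar / ∑ i : Fin C, varBlock s (A i) y θCL) *
              ∑ i : Fin C, Real.log (fBlock1 s (A i) y t)))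
          θCL := by
  set w : ℝ := varFull s θstar / ∑ i : Fin C, varBlock s (A i) y θCL with hw
  -- LHS
  have hL : deriv (deriv (fun t : ℝ => Real.log (fFull1 s y t))) θstar
      = -(varFull s θstar) := by
    have := deriv2_logG (ι := S → X) s (s y) θstar
    simp only [fFull1]
    rw [this, varFull_eq]
  -- RHS
  have hfun : (fun t : ℝ => w * ∑ i : Fin C, Real.log (fBlock1 s (A i) y t))
      = fun t : ℝ => w * ∑ i : Fin C,
          Real.log (Real.exp (t * s y) / ∑ u : ↥(A i) → X,
            Real.exp (t * s (updOn y (A i) u))) := by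
    simp only [fBlock1]
  have hd1 : deriv (fun t : ℝ => w * ∑ i : Fin C, Real.log (fBlock1 s (A i) y t))
      = fun t : ℝ => w * ∑ i : Fin C,
          (s y - (∑ u : ↥(A i) → X,
              s (updOn y (A i) u) * Real.exp (t * s (updOn y (A i) u)))
            / ∑ u : ↥(A i) → X, Real.exp (t * s (updOn y (A i) u))) := by
    funext t
    rw [hfun]
    exact ((HasDerivAt.fun_sum fun i _ =>
      hasDerivAt_logG (fun u : ↥(A i) → X => s (updOn y (A i) u)) (s y) t).const_mul
        w).deriv
  have hR : deriv (deriv (fun t : ℝ => w * ∑ i : Fin C, Real.log (fBlock1 s (A i) y t))) θCL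
      = w * ∑ i : Fin C, -(varBlock s (A i) y θCL) := by
    rw [hd1]
    have h2 := (HasDerivAt.fun_sum (u := Finset.univ) fun (i : Fin C) _ =>
      (hasDerivAt_const θCL (s y)).fun_sub
        (hasDerivAt_mean (fun u : ↥(A i) → X => s (updOn y (A i) u)) θCL)).const_mul w
    rw [h2.deriv]
    congr 1
    refine Finset.sum_congr rfl fun i _ => ?_
    rw [varBlock_eq]
    ring
  rw [hL, hR]
  rw [Finset.sum_neg_distrib, hw]
  field_simp
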